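/- Every proper edge colouring of the graph obtained from the complete graph K_4 by subdividing one of its edges once yields a rainbow copy of the triangle with a pendant edge. Consequently, AR_d of the triangle with a pendant edge equals 3, one less than its number of edges. -/

import Mathlib

open SimpleGraph

/-- A proper edge colouring: edges sharing a vertex receive distinct colours. -/
def IsProperEdgeColoring {V α : Type*} (G : SimpleGraph V) (c : Sym2 V → α) : Prop :=
  ∀ e₁ ∈ G.edgeSet, ∀ e₂ ∈ G.edgeSet, e₁ ≠ e₂ → (∃ v, v ∈ e₁ ∧ v ∈ e₂) → c e₁ ≠ c e₂

/-- The edge-coloured graph `(G, c)` contains a rainbow copy of `H`. -/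
def HasRainbowCopy {V W α : Type*} (G : SimpleGraph V) (c : Sym2 V → α)
    (H : SimpleGraph W) : Prop :=
  ∃ f : W ↪ V, (∀ u v, H.Adj u v → G.Adj (f u) (f v)) ∧
    ∀ u v x y, H.Adj u v → H.Adj x y → s(u, v) ≠ s(x, y) →
      c s(f u, f v) ≠ c s(f x, f y)

/-- Every proper edge colouring of `G` yields a rainbow copy of `H`. -/
def ForcesRainbow {V W : Type*} (G : SimpleGraph V) (H : SimpleGraph W) : Prop :=
  ∀ c : Sym2 V → ℕ, IsProperEdgeColoring G c → HasRainbowCopy G c H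

/-- The maximum degree of `G` is at most `k`. -/
def MaxDegreeLE {V : Type*} (G : SimpleGraph V) (k : ℕ) : Prop :=
  ∀ v, (G.neighborSet v).ncard ≤ k

/-- `k` is the degree anti-Ramsey number of `H`: the smallest `k` for which some
graph with maximum degree at most `k` forces a rainbow copy of `H` under any
proper edge colouring. -/
def DegreeAntiRamsey {W : Type*} (H : SimpleGraph W) (k : ℕ) : Prop :=
  (∃ (n : ℕ) (G : SimpleGraph (Fin n)), MaxDegreeLE G k ∧ ForcesRainbow G H) ∧
  ∀ m : ℕ, (∃ (n : ℕ) (G : SimpleGraph (Fin n)), MaxDegreeLE G m ∧ ForcesRainbow G H) → k ≤ m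

/-- The simple graph generated by symmetrising a relation and removing loops. -/
def graphFromRel {V : Type*} (r : V → V → Prop) : SimpleGraph V where
  Adj a b := a ≠ b ∧ (r a b ∨ r b a)
  symm := ⟨fun a b ⟨hne, h⟩ => ⟨hne.symm, h.symm⟩⟩
  loopless := ⟨fun _ ⟨hne, _⟩ => hne rfl⟩

/-- The triangle `x₀x₁x₂` with a pendant edge `x₂x₃`. -/
def trianglePendant : SimpleGraph (Fin 4) :=
  graphFromRel (fun a b =>
    (a, b) = (0, 1) ∨ (a, b) = (1, 2) ∨ (a, b) = (0, 2) ∨ (a, b) = (2, 3))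

/-- The graph obtained from `K₄` on `{0,1,2,3}` by subdividing the edge `01`
once, using the new vertex `4`. -/
def subdividedK4 : SimpleGraph (Fin 5) :=
  graphFromRel (fun a b =>
    (a, b) = (0, 2) ∨ (a, b) = (0, 3) ∨ (a, b) = (1, 2) ∨ (a, b) = (1, 3) ∨
    (a, b) = (2, 3) ∨ (a, b) = (0, 4) ∨ (a, b) = (1, 4))


instance {V : Type*} [DecidableEq V] (r : V → V → Prop) [DecidableRel r] :
    DecidableRel (graphFromRel r).Adj := fun a b =>
  inferInstanceAs (Decidable (a ≠ b ∧ (r a b ∨ r b a)))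

instance : DecidableRel trianglePendant.Adj := fun a b =>
  inferInstanceAs (Decidable ((graphFromRel _).Adj a b))

instance : DecidableRel subdividedK4.Adj := fun a b =>
  inferInstanceAs (Decidable ((graphFromRel _).Adj a b))

lemma hc2 {c : Sym2 (Fin 5) → ℕ} (hc : IsProperEdgeColoring subdividedK4 c)
    {a b x y : Fin 5} (h1 : subdividedK4.Adj a b) (h2 : subdividedK4.Adj x y)
    (hne : s(a, b) ≠ s(x, y)) (hsh : a = x ∨ a = y ∨ b = x ∨ b = y) :
    c s(a, b) ≠ c s(x, y) := by
  apply hc _ (subdividedK4.mem_edgeSet.mpr h1) _ (subdividedK4.mem_edgeSet.mpr h2) hne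
  rcases hsh with rfl | rfl | rfl | rfl
  · exact ⟨a, by simp, by simp⟩
  · exact ⟨a, by simp, by simp⟩
  · exact ⟨b, by simp, by simp⟩
  · exact ⟨b, by simp, by simp⟩

lemma forces : ForcesRainbow subdividedK4 trianglePendant := by
  intro c hc
  by_cases h : c s((1 : Fin 5), 4) = c s(2, 3)
  · have h1 : c s((0 : Fin 5), 4) ≠ c s(2, 3) := by
      rw [← h]; exact hc2 hc (by decide) (by decide) (by decide) (by decide)
    have h2 : c s((4 : Fin 5), 0) ≠ c s(2, 3) := by rw [Sym2.eq_swap]; exact h1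
    have h3 : c s((0 : Fin 5), 4) ≠ c s(3, 2) := by
      rw [show s((3 : Fin 5), 2) = s(2, 3) from Sym2.eq_swap]; exact h1
    have h4 : c s((4 : Fin 5), 0) ≠ c s(3, 2) := by rw [Sym2.eq_swap]; exact h3
    refine ⟨⟨![2, 3, 0, 4], by decide⟩, by decide, ?_⟩
    intro u v x y huv hxy hne
    fin_cases u <;> fin_cases v <;> fin_cases x <;> fin_cases y <;>
      first
        | exact absurd huv (by decide)
        | exact absurd hxy (by decide)
        | exact absurd (by decide) hne
        | exact h1 | exact h2 | exact h3 | exact h4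
        | exact h1.symm | exact h2.symm | exact h3.symm | exact h4.symm
        | exact hc2 hc (by decide) (by decide) (by decide) (by decide)
  · have h1 : c s((1 : Fin 5), 4) ≠ c s(2, 3) := h
    have h2 : c s((4 : Fin 5), 1) ≠ c s(2, 3) := by rw [Sym2.eq_swap]; exact h1
    have h3 : c s((1 : Fin 5), 4) ≠ c s(3, 2) := by
      rw [show s((3 : Fin 5), 2) = s(2, 3) from Sym2.eq_swap]; exact h1
    have h4 : c s((4 : Fin 5), 1) ≠ c s(3, 2) := by rw [Sym2.eq_swap]; exact h3
    refine ⟨⟨![2, 3, 1, 4], by decide⟩, by decide, ?_⟩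
    intro u v x y huv hxy hne
    fin_cases u <;> fin_cases v <;> fin_cases x <;> fin_cases y <;>
      first
        | exact absurd huv (by decide)
        | exact absurd hxy (by decide)
        | exact absurd (by decide) hne
        | exact h1 | exact h2 | exact h3 | exact h4
        | exact h1.symm | exact h2.symm | exact h3.symm | exact h4.symm
        | exact hc2 hc (by decide) (by decide) (by decide) (by decide)

theorem stmt_19 :
    ForcesRainbow subdividedK4 trianglePendant ∧
    DegreeAntiRamsey trianglePendant 3 ∧ trianglePendant.edgeSet.ncard = 4 := by
  refine ⟨forces, ⟨⟨5, subdividedK4, ?_, forces⟩, ?_⟩, ?_⟩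
  · intro v
    rw [Set.ncard_eq_toFinset_card']
    fin_cases v <;> decide
  · rintro m ⟨n, G, hdeg, hforce⟩
    obtain ⟨f, hadj, -⟩ := hforce (fun e => ((Fintype.equivFin (Sym2 (Fin n))) e : ℕ))
      (fun e₁ _ e₂ _ hne _ h => hne (Fintype.equivFin _ |>.injective (Fin.val_injective h)))
    have hsub : ({f 0, f 1, f 3} : Set (Fin n)) ⊆ G.neighborSet (f 2) := by
      rintro w (rfl | rfl | rfl)
      · exact hadj 2 0 (by decide)
      · exact hadj 2 1 (by decide)
      · exact hadj 2 3 (by decide)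
    have h3 : ({f 0, f 1, f 3} : Set (Fin n)).ncard = 3 := by
      rw [Set.ncard_eq_three]
      exact ⟨f 0, f 1, f 3, fun he => by simpa using f.injective he,
        fun he => by simpa using f.injective he, fun he => by simpa using f.injective he, rfl⟩
    calc 3 = ({f 0, f 1, f 3} : Set (Fin n)).ncard := h3.symm
      _ ≤ (G.neighborSet (f 2)).ncard := Set.ncard_le_ncard hsub (Set.toFinite _)
      _ ≤ m := hdeg (f 2)
  · rw [← SimpleGraph.coe_edgeFinset, Set.ncard_coe_finset]
    decide
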